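/- Let q₁, q₂ be PIBQFs, let γᵢ := γ_{qᵢ} be their invariant automorphs, set Γ = SL(2,ℤ) and Γᵢ := {±γᵢᵏ : k ∈ ℤ} ⊆ Γ. Then the assignment σ ↦ (σγ₁σ⁻¹, γ₂) induces a well-defined bijection from the set of double cosets Γ₂σΓ₁ ∈ Γ₂\Γ/Γ₁ satisfying det((σγ₁σ⁻¹)γ₂ − γ₂(σγ₁σ⁻¹)) > 0 onto the set of pairs {(δ₁,δ₂) : δ₁ is Γ-conjugate to γ₁, δ₂ is Γ-conjugate to γ₂, det(δ₁δ₂ − δ₂δ₁) > 0} modulo simultaneous conjugation ((δ₁,δ₂) ∼ (αδ₁α⁻¹, αδ₂α⁻¹) for α ∈ Γ). -/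
import Mathlib


/-- A binary quadratic form `[A,B,C]`, encoded as a triple of integers. -/
abbrev BQF := ℤ × ℤ × ℤ

/-- The discriminant `B² - 4AC` of a binary quadratic form `[A,B,C]`. -/
def disc (q : BQF) : ℤ := q.2.1 ^ 2 - 4 * q.1 * q.2.2

/-- A binary quadratic form is primitive if `gcd(A,B,C) = 1`. -/
def IsPrimitiveBQF (q : BQF) : Prop := Int.gcd q.1 (Int.gcd q.2.1 q.2.2) = 1

/-- A primitive indefinite binary quadratic form: primitive, of positive
nonsquare discriminant. -/
def IsPIBQF (q : BQF) : Prop := IsPrimitiveBQF q ∧ 0 < disc q ∧ ¬ IsSquare (disc q)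

abbrev SL2Z := Matrix.SpecialLinearGroup (Fin 2) ℤ

/-- The action of `SL(2,ℤ)` on binary quadratic forms:
`(γ ∘ q)(x,y) = q(ax + by, cx + dy)`. -/
def actForm (γ : SL2Z) (q : BQF) : BQF :=
  ((q.1 * (γ.1 0 0)^2 + q.2.1 * (γ.1 0 0) * (γ.1 1 0) + q.2.2 * (γ.1 1 0)^2),
   (2 * q.1 * (γ.1 0 0) * (γ.1 0 1) + q.2.1 * ((γ.1 0 0) * (γ.1 1 1) + (γ.1 0 1) * (γ.1 1 0))
      + 2 * q.2.2 * (γ.1 1 0) * (γ.1 1 1)),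
   (q.1 * (γ.1 0 1)^2 + q.2.1 * (γ.1 0 1) * (γ.1 1 1) + q.2.2 * (γ.1 1 1)^2))

/-- Equivalence of binary quadratic forms under `SL(2,ℤ)`. -/
def equivF (q q' : BQF) : Prop := ∃ γ : SL2Z, actForm γ q = q'

/-- `B_Δ(q₁,q₂) = B₁B₂ - 2A₁C₂ - 2A₂C₁`. -/
def BΔ (q₁ q₂ : BQF) : ℤ := q₁.2.1 * q₂.2.1 - 2 * q₁.1 * q₂.2.2 - 2 * q₂.1 * q₁.2.2

/-- A fundamental discriminant. -/
def IsFundamentalDisc (D : ℤ) : Prop :=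
  (D % 4 = 1 ∧ Squarefree D) ∨
    (∃ m : ℤ, D = 4 * m ∧ Squarefree m ∧ (m % 4 = 2 ∨ m % 4 = 3))

/-- The Kronecker symbol `(a / p)` for a prime `p`. -/
def kron (a : ℤ) (p : ℕ) : ℤ :=
  if p = 2 then (if a % 2 = 0 then 0 else if a % 8 = 1 ∨ a % 8 = 7 then 1 else -1)
  else jacobiSym a p

/-- `ε(p)`: the nonzero value among the Kronecker symbols `(D₁/p)`, `(D₂/p)`. -/
def epsP (D₁ D₂ : ℤ) (p : ℕ) : ℤ := if kron D₁ p = 0 then kron D₂ p else kron D₁ p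

/-- The multiplicative extension of `ε` to positive integers. -/
def epsMul (D₁ D₂ : ℤ) (d : ℕ) : ℤ :=
  d.factorization.prod fun p k => (epsP D₁ D₂ p) ^ k

/-- Pairs of primitive forms of discriminants `D₁, D₂` with `B_Δ = n`. -/
def PairSet (D₁ D₂ n : ℤ) : Type :=
  {p : BQF × BQF // IsPrimitiveBQF p.1 ∧ IsPrimitiveBQF p.2 ∧
    disc p.1 = D₁ ∧ disc p.2 = D₂ ∧ BΔ p.1 p.2 = n}

/-- Simultaneous `SL(2,ℤ)`-equivalence of pairs. -/
def pairRel (D₁ D₂ n : ℤ) (x y : PairSet D₁ D₂ n) : Prop :=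
  ∃ γ : SL2Z, actForm γ x.1.1 = y.1.1 ∧ actForm γ x.1.2 = y.1.2

/-- `p(n)`: the number of simultaneous equivalence classes of pairs of primitive
forms of discriminants `D₁, D₂` with `B_Δ = n`. -/
noncomputable def pCount (D₁ D₂ n : ℤ) : ℕ := Nat.card (Quot (pairRel D₁ D₂ n))

/-- The root geodesic of an indefinite form, as a subset of the upper half plane. -/
def rootGeodesic (q : BQF) : Set ℂ :=
  {z : ℂ | 0 < z.im ∧
    (q.1 : ℝ) * Complex.normSq z + (q.2.1 : ℝ) * z.re + (q.2.2 : ℝ) = 0}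

/-- The first root `(-B + √D)/(2A)` of a PIBQF. -/
noncomputable def firstRoot (q : BQF) : ℝ :=
  (-(q.2.1 : ℝ) + Real.sqrt (disc q)) / (2 * q.1)

/-- The second root `(-B - √D)/(2A)` of a PIBQF. -/
noncomputable def secondRoot (q : BQF) : ℝ :=
  (-(q.2.1 : ℝ) - Real.sqrt (disc q)) / (2 * q.1)


/-- The matrix of the invariant automorph of `q = [A,B,C]` built from a Pell
solution `(T,U)`: `[[(T-BU)/2, -CU],[AU, (T+BU)/2]]`. -/
def autMat (T U : ℤ) (q : BQF) : Matrix (Fin 2) (Fin 2) ℤ :=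
  !![(T - q.2.1 * U) / 2, -q.2.2 * U; q.1 * U, (T + q.2.1 * U) / 2]

/-- `det(ab - ba)` for `a, b ∈ SL(2,ℤ)`; positivity expresses that the root
geodesics of the hyperbolic matrices `a, b` intersect uniquely. -/
def detComm (a b : SL2Z) : ℤ :=
  ((a : Matrix (Fin 2) (Fin 2) ℤ) * (b : Matrix (Fin 2) (Fin 2) ℤ)
    - (b : Matrix (Fin 2) (Fin 2) ℤ) * (a : Matrix (Fin 2) (Fin 2) ℤ)).det

/-- Elements `σ ∈ Γ = SL(2,ℤ)` with `det(σγ₁σ⁻¹·γ₂ - γ₂·σγ₁σ⁻¹) > 0`. -/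
def DCosetDom (γ₁ γ₂ : SL2Z) : Type :=
  {σ : SL2Z // 0 < detComm (σ * γ₁ * σ⁻¹) γ₂}

/-- The double coset relation: `σ' ∈ Γ₂ σ Γ₁` with `Γᵢ = {±γᵢᵏ : k ∈ ℤ}`. -/
def dcRel (γ₁ γ₂ : SL2Z) (x y : DCosetDom γ₁ γ₂) : Prop :=
  ∃ j k : ℤ,
    (y.1 : Matrix (Fin 2) (Fin 2) ℤ) =
      ((γ₂ ^ j * x.1 * γ₁ ^ k : SL2Z) : Matrix (Fin 2) (Fin 2) ℤ) ∨
    (y.1 : Matrix (Fin 2) (Fin 2) ℤ) =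
      -((γ₂ ^ j * x.1 * γ₁ ^ k : SL2Z) : Matrix (Fin 2) (Fin 2) ℤ)

/-- Pairs `(δ₁,δ₂)` with `δᵢ` conjugate to `γᵢ` whose root geodesics
intersect. -/
def ConjPairSet (γ₁ γ₂ : SL2Z) : Type :=
  {p : SL2Z × SL2Z // (∃ α : SL2Z, p.1 = α * γ₁ * α⁻¹) ∧
    (∃ α : SL2Z, p.2 = α * γ₂ * α⁻¹) ∧ 0 < detComm p.1 p.2}

/-- Simultaneous conjugation of pairs. -/
def simConjRel (γ₁ γ₂ : SL2Z) (x y : ConjPairSet γ₁ γ₂) : Prop :=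
  ∃ α : SL2Z, y.1.1 = α * x.1.1 * α⁻¹ ∧ y.1.2 = α * x.1.2 * α⁻¹


-- ===== auxiliary machinery =====

def cmat (A B C : ℤ) (a u : ℤ) : Matrix (Fin 2) (Fin 2) ℤ :=
  !![a, -C * u; A * u, a + B * u]
lemma cmat_mul (A B C a₁ u₁ a₂ u₂ : ℤ) :
    cmat A B C a₁ u₁ * cmat A B C a₂ u₂ =
      cmat A B C (a₁*a₂ - A*C*u₁*u₂) (a₁*u₂ + a₂*u₁ + B*u₁*u₂) := by
  simp only [cmat, Matrix.mul_fin_two]; congr 1 <;> ring_nf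
lemma cmat_one (A B C : ℤ) : cmat A B C 1 0 = 1 := by
  simp [cmat, Matrix.one_fin_two]
lemma cmat_neg (A B C a u : ℤ) : -(cmat A B C a u) = cmat A B C (-a) (-u) := by
  simp only [cmat]; ext i j; fin_cases i <;> fin_cases j <;> simp <;> ring
lemma cmat_ext (A B C a₁ u₁ a₂ u₂ : ℤ) (h1 : a₁ = a₂) (h2 : u₁ = u₂) :
    cmat A B C a₁ u₁ = cmat A B C a₂ u₂ := by rw [h1, h2]
lemma disc_ge_five (A B C : ℤ) (hpos : 0 < B^2 - 4*A*C) (hnsq : ¬ IsSquare (B^2 - 4*A*C)) :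
    5 ≤ B^2 - 4*A*C := by
  have hmod : (B^2 - 4*A*C) % 4 = 0 ∨ (B^2 - 4*A*C) % 4 = 1 := by
    rcases Int.even_or_odd B with ⟨m, hm⟩ | ⟨m, hm⟩
    · left; have : B^2 - 4*A*C = 4 * (m*m - A*C) := by rw [hm]; ring
      omega
    · right; have : B^2 - 4*A*C = 4 * (m*m + m - A*C) + 1 := by rw [hm]; ring
      omega
  by_contra hlt
  push_neg at hlt
  have : B^2 - 4*A*C = 1 ∨ B^2 - 4*A*C = 4 := by omega
  rcases this with h | h
  · exact hnsq ⟨1, by omega⟩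
  · exact hnsq ⟨2, by omega⟩

lemma aux_core (q : BQF) (h : IsPIBQF q) (T U : ℤ) (hT : 0 < T) (hU : 0 < U)
    (hPell : T ^ 2 - disc q * U ^ 2 = 4)
    (hmin : ∀ t u : ℤ, 0 < t → 0 < u → t ^ 2 - disc q * u ^ 2 = 4 → T ≤ t ∧ U ≤ u)
    (γ : SL2Z) (hγ : (γ : Matrix (Fin 2) (Fin 2) ℤ) = autMat T U q) :
    ((γ : Matrix (Fin 2) (Fin 2) ℤ) = cmat q.1 q.2.1 q.2.2 ((T - q.2.1*U)/2) U) ∧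
    (∀ a u : ℤ, a^2 + q.2.1*a*u + q.1*q.2.2*u^2 = 1 →
      ∃ k : ℤ, cmat q.1 q.2.1 q.2.2 a u = ((γ^k : SL2Z) : Matrix (Fin 2) (Fin 2) ℤ) ∨
        cmat q.1 q.2.1 q.2.2 a u = -((γ^k : SL2Z) : Matrix (Fin 2) (Fin 2) ℤ)) := by
  obtain ⟨A, B, C⟩ := q
  obtain ⟨hprim, hDpos, hDnsq⟩ := h
  simp only [disc] at hPell hmin hDpos hDnsq
  have hD5 : 5 ≤ B^2 - 4*A*C := disc_ge_five A B C hDpos hDnsq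
  have hdvd : 2 ∣ T - B*U := by
    have hprod : (T - B*U) * (T + B*U) = 4*(1 - A*C*U^2) := by linear_combination hPell
    rcases Int.even_mul.mp (⟨2*(1 - A*C*U^2), by linarith⟩ : Even ((T - B*U) * (T + B*U))) with he | he
    · exact he.two_dvd
    · rcases he with ⟨w, hw⟩
      have : Even (T - B*U) := ⟨w - B*U, by linarith⟩
      exact this.two_dvd
  obtain ⟨P, h2P⟩ : ∃ P : ℤ, 2*P = T - B*U := ⟨(T - B*U)/2, by omega⟩
  have hγ' : (γ : Matrix (Fin 2) (Fin 2) ℤ) = cmat A B C P U := by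
    rw [hγ]
    show autMat T U (A,B,C) = _
    rw [autMat, cmat]
    have e1 : (T - B * U)/2 = P := by omega
    have e2 : (T + B * U)/2 = P + B*U := by omega
    simp only [e1, e2]
  have hNP : P^2 + B*P*U + A*C*U^2 = 1 := by
    have h4 : 4 * (P^2 + B*P*U + A*C*U^2) = 4 := by
      linear_combination hPell + (2*P + B*U + T) * h2P
    linarith
  have hT3 : 3 ≤ T := by nlinarith [hPell, hD5, hU]
  have hpow : ∀ (k : ℤ), ((γ^k : SL2Z) : Matrix (Fin 2) (Fin 2) ℤ) * ((γ^(-k) : SL2Z) : Matrix (Fin 2) (Fin 2) ℤ) = 1 := by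
    intro k
    rw [← Matrix.SpecialLinearGroup.coe_mul, ← zpow_add, add_neg_cancel, zpow_zero,
      Matrix.SpecialLinearGroup.coe_one]
  have hsolve : ∀ (X : Matrix (Fin 2) (Fin 2) ℤ) (k : ℤ),
      X * ((γ^k : SL2Z) : Matrix (Fin 2) (Fin 2) ℤ) = 1 →
      X = ((γ^(-k) : SL2Z) : Matrix (Fin 2) (Fin 2) ℤ) := by
    intro X k hXk
    calc X = X * (((γ^k : SL2Z) : Matrix (Fin 2) (Fin 2) ℤ) * ((γ^(-k) : SL2Z) : Matrix (Fin 2) (Fin 2) ℤ)) := by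
          rw [hpow, mul_one]
      _ = (X * ((γ^k : SL2Z) : Matrix (Fin 2) (Fin 2) ℤ)) * ((γ^(-k) : SL2Z) : Matrix (Fin 2) (Fin 2) ℤ) := by
          rw [mul_assoc]
      _ = _ := by rw [hXk, one_mul]
  have hsolveNeg : ∀ (X : Matrix (Fin 2) (Fin 2) ℤ) (k : ℤ),
      X * ((γ^k : SL2Z) : Matrix (Fin 2) (Fin 2) ℤ) = -1 →
      X = -((γ^(-k) : SL2Z) : Matrix (Fin 2) (Fin 2) ℤ) := by
    intro X k hXk
    calc X = X * (((γ^k : SL2Z) : Matrix (Fin 2) (Fin 2) ℤ) * ((γ^(-k) : SL2Z) : Matrix (Fin 2) (Fin 2) ℤ)) := by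
          rw [hpow, mul_one]
      _ = (X * ((γ^k : SL2Z) : Matrix (Fin 2) (Fin 2) ℤ)) * ((γ^(-k) : SL2Z) : Matrix (Fin 2) (Fin 2) ℤ) := by
          rw [mul_assoc]
      _ = _ := by rw [hXk, neg_one_mul]
  have hsucc : ∀ (k : ℤ) (X : Matrix (Fin 2) (Fin 2) ℤ),
      (X = ((γ^k : SL2Z) : Matrix (Fin 2) (Fin 2) ℤ) ∨ X = -((γ^k : SL2Z) : Matrix (Fin 2) (Fin 2) ℤ)) →
      (X * (γ : Matrix (Fin 2) (Fin 2) ℤ) = ((γ^(k+1) : SL2Z) : Matrix (Fin 2) (Fin 2) ℤ) ∨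
       X * (γ : Matrix (Fin 2) (Fin 2) ℤ) = -((γ^(k+1) : SL2Z) : Matrix (Fin 2) (Fin 2) ℤ)) := by
    intro k X hX
    have hc : ((γ^k : SL2Z) : Matrix (Fin 2) (Fin 2) ℤ) * (γ : Matrix (Fin 2) (Fin 2) ℤ)
        = ((γ^(k+1) : SL2Z) : Matrix (Fin 2) (Fin 2) ℤ) := by
      rw [← Matrix.SpecialLinearGroup.coe_mul, ← zpow_add_one]
    rcases hX with hX | hX
    · left; rw [hX, hc]
    · right; rw [hX, neg_mul, hc]
  have core : ∀ n : ℕ, ∀ a u : ℤ, u.natAbs = n → a^2 + B*a*u + A*C*u^2 = 1 →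
      ∃ k : ℤ, cmat A B C a u = ((γ^k : SL2Z) : Matrix (Fin 2) (Fin 2) ℤ) ∨
        cmat A B C a u = -((γ^k : SL2Z) : Matrix (Fin 2) (Fin 2) ℤ) := by
    intro n
    induction n using Nat.strong_induction_on with
    | _ n IH =>
      intro a u hn hN
      rcases eq_or_ne u 0 with hu0 | hu0
      · subst hu0
        have haa : a * a = 1 := by linear_combination hN
        rcases Int.mul_eq_one_iff_eq_one_or_neg_one.mp haa with ⟨ha, -⟩ | ⟨ha, -⟩ <;> subst ha
        · exact ⟨0, Or.inl (by rw [zpow_zero, Matrix.SpecialLinearGroup.coe_one]; exact cmat_one A B C)⟩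
        · refine ⟨0, Or.inr ?_⟩
          rw [zpow_zero, Matrix.SpecialLinearGroup.coe_one]
          have h1 := cmat_neg A B C 1 0
          rw [neg_zero] at h1
          rw [← h1, cmat_one]
      · have key : ∀ b v : ℤ, v.natAbs = n → 0 < v → 0 < 2*b + B*v →
            b^2 + B*b*v + A*C*v^2 = 1 →
            ∃ k : ℤ, cmat A B C b v = ((γ^k : SL2Z) : Matrix (Fin 2) (Fin 2) ℤ) ∨
              cmat A B C b v = -((γ^k : SL2Z) : Matrix (Fin 2) (Fin 2) ℤ) := by
          intro b v hv hvpos htpos hNb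
          obtain ⟨t, ht⟩ : ∃ t : ℤ, t = 2*b + B*v := ⟨_, rfl⟩
          rw [← ht] at htpos
          have hPellt : t^2 - (B^2 - 4*A*C)*v^2 = 4 := by
            linear_combination 4*hNb + (t + 2*b + B*v)*ht
          obtain ⟨hTt, hUv⟩ := hmin t v htpos hvpos hPellt
          obtain ⟨b', hb'⟩ : ∃ b' : ℤ, b' = b*(P + B*U) + A*C*v*U := ⟨_, rfl⟩
          obtain ⟨v', hv'⟩ : ∃ v' : ℤ, v' = P*v - b*U := ⟨_, rfl⟩
          have hN' : b'^2 + B*b'*v' + A*C*v'^2 = 1 := by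
            rw [hb', hv']
            linear_combination (P^2 + B*P*U + A*C*U^2) * hNb + hNP
          have h2v' : 2*v' = T*v - t*U := by
            rw [hv', ht]; linear_combination v * h2P
          have hsum : 0 < T*v + t*U := by
            have h1 := mul_pos hT hvpos
            have h2 := mul_pos htpos hU
            linarith
          have hprodsq : (T*v - t*U) * (T*v + t*U) = 4*(v^2 - U^2) := by
            linear_combination v^2 * hPell - U^2 * hPellt
          have hv2U2 : 0 ≤ v^2 - U^2 := by nlinarith [hUv, hU]
          have hTv : 0 ≤ T*v - t*U := by
            by_contra hc
            push_neg at hc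
            have hneg : (T*v - t*U) * (T*v + t*U) < 0 := mul_neg_of_neg_of_pos hc hsum
            linarith
          have hlt : T*v - t*U < 2*v := by
            have hid : (t*U)^2 - (v*(T-2))^2 = 4*U^2 + 4*v^2*(T-2) := by
              linear_combination U^2 * hPellt - v^2 * hPell
            have hU2 : 0 < U^2 := by positivity
            have hvT2 : 0 ≤ v^2*(T-2) := mul_nonneg (sq_nonneg v) (by linarith)
            have h2 : (v*(T-2))^2 < (t*U)^2 := by linarith
            have h4 : 0 < t*U := mul_pos htpos hU
            have h5 : v*(T-2) < t*U := by
              by_contra hc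
              push_neg at hc
              have h6 := mul_self_le_mul_self h4.le hc
              have e1 : (t*U)^2 = (t*U)*(t*U) := by ring
              have e2 : (v*(T-2))^2 = (v*(T-2))*(v*(T-2)) := by ring
              linarith
            have h7 : v*(T-2) = T*v - 2*v := by ring
            linarith
          have hvnn : 0 ≤ v' := by omega
          have hvlt : v' < v := by omega
          have hrec : cmat A B C b v = cmat A B C b' v' * (γ : Matrix (Fin 2) (Fin 2) ℤ) := by
            rw [hγ', cmat_mul]
            refine (cmat_ext A B C _ _ _ _ ?_ ?_).symm
            · rw [hb', hv']; linear_combination b * hNP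
            · rw [hb', hv']; linear_combination v * hNP
          obtain ⟨k, hk⟩ := IH v'.natAbs (by omega) b' v' rfl hN'
          refine ⟨k+1, ?_⟩
          rw [hrec]
          exact hsucc k _ hk
        obtain ⟨t, ht⟩ : ∃ t : ℤ, t = 2*a + B*u := ⟨_, rfl⟩
        have hPellt : t^2 - (B^2-4*A*C)*u^2 = 4 := by
          linear_combination 4*hN + (t + 2*a + B*u)*ht
        have hu2 : 1 ≤ u^2 := by rcases hu0.lt_or_gt with hc | hc <;> nlinarith
        have ht0 : t ≠ 0 := by
          intro h0
          rw [h0] at hPellt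
          nlinarith [hD5, hu2]
        have hprodinv : ∀ x y : ℤ, x^2 + B*x*y + A*C*y^2 = 1 →
            cmat A B C x y * cmat A B C (x + B*y) (-y) = 1 := by
          intro x y hxy
          rw [cmat_mul, show x*(x+B*y) - A*C*y*(-y) = 1 from by linear_combination hxy,
            show x*(-y) + (x+B*y)*y + B*y*(-y) = 0 from by ring, cmat_one]
        rcases hu0.lt_or_gt with hult | hugt
        · -- u < 0
          rcases ht0.lt_or_gt with htlt | htgt
          · -- u < 0, t < 0 : use (-a, -u)
            obtain ⟨k, hk⟩ := key (-a) (-u) (by omega) (by omega)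
              (by rw [show 2*(-a) + B*(-u) = -(2*a + B*u) from by ring, ← ht]; omega)
              (by linear_combination hN)
            have hflip : cmat A B C a u = -(cmat A B C (-a) (-u)) := by
              rw [cmat_neg, neg_neg, neg_neg]
            rcases hk with hk | hk
            · exact ⟨k, Or.inr (by rw [hflip, hk])⟩
            · exact ⟨k, Or.inl (by rw [hflip, hk, neg_neg])⟩
          · -- u < 0, t > 0 : use (a + B*u, -u)
            obtain ⟨k, hk⟩ := key (a + B*u) (-u) (by omega) (by omega)
              (by rw [show 2*(a + B*u) + B*(-u) = 2*a + B*u from by ring, ← ht]; omega)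
              (by linear_combination hN)
            have hprod := hprodinv a u hN
            rcases hk with hk | hk
            · refine ⟨-k, Or.inl ?_⟩
              exact hsolve _ k (by rw [← hk]; exact hprod)
            · refine ⟨-k, Or.inr ?_⟩
              refine hsolveNeg _ k ?_
              have h2 : cmat A B C a u * -((γ^k : SL2Z) : Matrix (Fin 2) (Fin 2) ℤ) = 1 := by
                rw [← hk]; exact hprod
              rw [mul_neg] at h2
              exact neg_eq_iff_eq_neg.mp h2
        · -- u > 0
          rcases ht0.lt_or_gt with htlt | htgt
          · -- u > 0, t < 0 : use (-a - B*u, u)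
            obtain ⟨k, hk⟩ := key (-a - B*u) u hn hugt
              (by rw [show 2*(-a - B*u) + B*u = -(2*a + B*u) from by ring, ← ht]; omega)
              (by linear_combination hN)
            have hprod := hprodinv a u hN
            have hneg : cmat A B C (a + B*u) (-u) = -(cmat A B C (-a - B*u) u) := by
              rw [cmat_neg]
              exact cmat_ext A B C _ _ _ _ (by ring) (by ring)
            rcases hk with hk | hk
            · refine ⟨-k, Or.inr ?_⟩
              refine hsolveNeg _ k ?_
              have h2 : cmat A B C a u * -((γ^k : SL2Z) : Matrix (Fin 2) (Fin 2) ℤ) = 1 := by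
                rw [← hk, ← hneg]; exact hprod
              rw [mul_neg] at h2
              exact neg_eq_iff_eq_neg.mp h2
            · refine ⟨-k, Or.inl ?_⟩
              refine hsolve _ k ?_
              rw [show ((γ^k : SL2Z) : Matrix (Fin 2) (Fin 2) ℤ) = cmat A B C (a + B*u) (-u) from by
                rw [hneg, hk, neg_neg]]
              exact hprodinv a u hN
          · -- u > 0, t > 0
            exact key a u hn hugt (by rw [← ht]; omega) hN
  have hPeq : (T - B*U)/2 = P := by omega
  exact ⟨by rw [hγ', hPeq], fun a u hN => core u.natAbs a u rfl hN⟩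


lemma aux_central (q : BQF) (h : IsPIBQF q) (T U : ℤ) (hT : 0 < T) (hU : 0 < U)
    (hPell : T ^ 2 - disc q * U ^ 2 = 4)
    (hmin : ∀ t u : ℤ, 0 < t → 0 < u → t ^ 2 - disc q * u ^ 2 = 4 → T ≤ t ∧ U ≤ u)
    (γ : SL2Z) (hγ : (γ : Matrix (Fin 2) (Fin 2) ℤ) = autMat T U q) :
    ∀ M : SL2Z, M * γ = γ * M → ∃ k : ℤ,
      (M : Matrix (Fin 2) (Fin 2) ℤ) = ((γ^k : SL2Z) : Matrix (Fin 2) (Fin 2) ℤ) ∨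
      (M : Matrix (Fin 2) (Fin 2) ℤ) = -((γ^k : SL2Z) : Matrix (Fin 2) (Fin 2) ℤ) := by
  obtain ⟨hγ', core⟩ := aux_core q h T U hT hU hPell hmin γ hγ
  obtain ⟨A, B, C⟩ := q
  simp only at hγ' core ⊢
  intro M hMγ
  have hcomm : (M : Matrix (Fin 2) (Fin 2) ℤ) * (γ : Matrix (Fin 2) (Fin 2) ℤ)
      = (γ : Matrix (Fin 2) (Fin 2) ℤ) * (M : Matrix (Fin 2) (Fin 2) ℤ) := by
    rw [← Matrix.SpecialLinearGroup.coe_mul, ← Matrix.SpecialLinearGroup.coe_mul, hMγ]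
  obtain ⟨P, hP⟩ : ∃ P : ℤ, (T - B*U)/2 = P := ⟨_, rfl⟩
  rw [hP] at hγ'
  obtain ⟨a, ha⟩ : ∃ a : ℤ, (M : Matrix (Fin 2) (Fin 2) ℤ) 0 0 = a := ⟨_, rfl⟩
  obtain ⟨b, hb⟩ : ∃ b : ℤ, (M : Matrix (Fin 2) (Fin 2) ℤ) 0 1 = b := ⟨_, rfl⟩
  obtain ⟨c, hc⟩ : ∃ c : ℤ, (M : Matrix (Fin 2) (Fin 2) ℤ) 1 0 = c := ⟨_, rfl⟩
  obtain ⟨d, hd⟩ : ∃ d : ℤ, (M : Matrix (Fin 2) (Fin 2) ℤ) 1 1 = d := ⟨_, rfl⟩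
  have hMeta : (M : Matrix (Fin 2) (Fin 2) ℤ) = !![a, b; c, d] := by
    rw [Matrix.eta_fin_two (M : Matrix (Fin 2) (Fin 2) ℤ), ha, hb, hc, hd]
  rw [hMeta, hγ'] at hcomm
  have e00 := congrFun (congrFun hcomm 0) 0
  have e01 := congrFun (congrFun hcomm 0) 1
  have e10 := congrFun (congrFun hcomm 1) 0
  simp [cmat, Matrix.mul_apply, Fin.sum_univ_two] at e00 e01 e10
  have hU0 : U ≠ 0 := by omega
  have h1 : A*b + C*c = 0 :=
    (mul_eq_zero.mp (show (A*b + C*c)*U = 0 from by linear_combination e00)).resolve_right hU0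
  have h2 : C*(a-d) - B*b = 0 :=
    (mul_eq_zero.mp (show (C*(a-d) - B*b)*U = 0 from by linear_combination -e01)).resolve_right hU0
  have h3 : A*(a-d) + B*c = 0 :=
    (mul_eq_zero.mp (show (A*(a-d) + B*c)*U = 0 from by linear_combination -e10)).resolve_right hU0
  obtain ⟨x, y, z, hbez⟩ : ∃ x y z : ℤ, A*x + B*y + C*z = 1 := by
    have hprim := h.1
    have hg : ((Int.gcd A (Int.gcd B C) : ℤ)) = 1 := by exact_mod_cast hprim
    have k1 := Int.gcd_eq_gcd_ab A (Int.gcd B C : ℤ)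
    have k2 := Int.gcd_eq_gcd_ab B C
    exact ⟨Int.gcdA A (Int.gcd B C : ℤ),
      Int.gcdA B C * Int.gcdB A (Int.gcd B C : ℤ),
      Int.gcdB B C * Int.gcdB A (Int.gcd B C : ℤ),
      by linear_combination hg - k1 - (Int.gcdB A (Int.gcd B C : ℤ)) * k2⟩
  obtain ⟨u0, hu0⟩ : ∃ u0 : ℤ, u0 = x*c - y*(a-d) - z*b := ⟨_, rfl⟩
  have hAu : A*u0 = c := by
    rw [hu0]; linear_combination c*hbez - y*h3 - z*h1
  have hBu : B*u0 = d - a := by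
    rw [hu0]; linear_combination -(a-d)*hbez + x*h3 + z*h2
  have hCu : C*u0 = -b := by
    rw [hu0]; linear_combination (-b)*hbez + x*h1 - y*h2
  have hb2 : b = -C*u0 := by linarith
  have hc2 : c = A*u0 := by linarith
  have hd2 : d = a + B*u0 := by linarith
  have hdet : Matrix.det (M : Matrix (Fin 2) (Fin 2) ℤ) = 1 := M.prop
  rw [hMeta, Matrix.det_fin_two_of] at hdet
  rw [hb2, hc2, hd2] at hdet
  have hnorm : a^2 + B*a*u0 + A*C*u0^2 = 1 := by linear_combination hdet
  have hM2 : (M : Matrix (Fin 2) (Fin 2) ℤ) = cmat A B C a u0 := by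
    rw [hMeta, cmat, hb2, hc2, hd2]
  obtain ⟨k, hk⟩ := core a u0 hnorm
  exact ⟨k, by rw [hM2]; exact hk⟩

-- helpers
lemma detComm_conj (β a b : SL2Z) : detComm (β*a*β⁻¹) (β*b*β⁻¹) = detComm a b := by
  have h1 : (β*a*β⁻¹)*(β*b*β⁻¹) = β*(a*b)*β⁻¹ := by group
  have h2 : (β*b*β⁻¹)*(β*a*β⁻¹) = β*(b*a)*β⁻¹ := by group
  unfold detComm
  rw [← Matrix.SpecialLinearGroup.coe_mul, ← Matrix.SpecialLinearGroup.coe_mul, h1, h2]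
  simp only [Matrix.SpecialLinearGroup.coe_mul]
  have h3 : (β : Matrix (Fin 2) (Fin 2) ℤ) * ((a : Matrix (Fin 2) (Fin 2) ℤ) * b) * (β⁻¹ : SL2Z)
      - (β : Matrix (Fin 2) (Fin 2) ℤ) * ((b : Matrix (Fin 2) (Fin 2) ℤ) * a) * (β⁻¹ : SL2Z)
      = (β : Matrix (Fin 2) (Fin 2) ℤ) *
        (((a : Matrix (Fin 2) (Fin 2) ℤ) * b) - ((b : Matrix (Fin 2) (Fin 2) ℤ) * a)) * (β⁻¹ : SL2Z) := by
    noncomm_ring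
  rw [h3, Matrix.det_mul, Matrix.det_mul]
  simp [Matrix.det_adjugate, Matrix.SpecialLinearGroup.det_coe]

lemma simConj_equivalence (γ₁ γ₂ : SL2Z) : Equivalence (simConjRel γ₁ γ₂) := by
  constructor
  · intro x; exact ⟨1, by group, by group⟩
  · rintro x y ⟨α, h1, h2⟩
    exact ⟨α⁻¹, by rw [h1]; group, by rw [h2]; group⟩
  · rintro x y z ⟨α, h1, h2⟩ ⟨α', h1', h2'⟩
    exact ⟨α' * α, by rw [h1', h1]; group, by rw [h2', h2]; group⟩

lemma neg_conj (g h : SL2Z) : (-g) * h * (-g)⁻¹ = g * h * g⁻¹ := by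
  rw [inv_neg]
  simp [neg_mul, mul_neg]

/-- Propositions 3 and 4 of the paper.
For invariant automorphs `γ₁, γ₂` of PIBQFs, `σ ↦ (σγ₁σ⁻¹, γ₂)` induces a
bijection from the double cosets `Γ₂\Γ/Γ₁` whose associated root geodesics
intersect, onto pairs of conjugates of `(γ₁,γ₂)` with intersecting root
geodesics, modulo simultaneous conjugation. -/
theorem doubleCoset_bijection
    (q₁ q₂ : BQF) (h₁ : IsPIBQF q₁) (h₂ : IsPIBQF q₂)
    (T₁ U₁ T₂ U₂ : ℤ) (hT₁ : 0 < T₁) (hU₁ : 0 < U₁) (hT₂ : 0 < T₂) (hU₂ : 0 < U₂)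
    (hPell₁ : T₁ ^ 2 - disc q₁ * U₁ ^ 2 = 4)
    (hPell₂ : T₂ ^ 2 - disc q₂ * U₂ ^ 2 = 4)
    (hmin₁ : ∀ t u : ℤ, 0 < t → 0 < u → t ^ 2 - disc q₁ * u ^ 2 = 4 → T₁ ≤ t ∧ U₁ ≤ u)
    (hmin₂ : ∀ t u : ℤ, 0 < t → 0 < u → t ^ 2 - disc q₂ * u ^ 2 = 4 → T₂ ≤ t ∧ U₂ ≤ u)
    (γ₁ γ₂ : SL2Z)
    (hγ₁ : (γ₁ : Matrix (Fin 2) (Fin 2) ℤ) = autMat T₁ U₁ q₁)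
    (hγ₂ : (γ₂ : Matrix (Fin 2) (Fin 2) ℤ) = autMat T₂ U₂ q₂) :
    ∃ f : Quot (dcRel γ₁ γ₂) → Quot (simConjRel γ₁ γ₂),
      Function.Bijective f ∧
      ∀ (σ : SL2Z) (hσ : 0 < detComm (σ * γ₁ * σ⁻¹) γ₂),
        f (Quot.mk (dcRel γ₁ γ₂) ⟨σ, hσ⟩) =
          Quot.mk (simConjRel γ₁ γ₂)
            ⟨(σ * γ₁ * σ⁻¹, γ₂), ⟨σ, rfl⟩, ⟨1, by group⟩, hσ⟩ := by
  have cent₁' : ∀ M : SL2Z, M * γ₁ = γ₁ * M → ∃ k : ℤ, M = γ₁^k ∨ M = -(γ₁^k) := by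
    intro M hM
    obtain ⟨k, hk | hk⟩ := aux_central q₁ h₁ T₁ U₁ hT₁ hU₁ hPell₁ hmin₁ γ₁ hγ₁ M hM
    · exact ⟨k, Or.inl (Subtype.ext hk)⟩
    · exact ⟨k, Or.inr (Subtype.ext (by rw [hk]; simp))⟩
  have cent₂' : ∀ M : SL2Z, M * γ₂ = γ₂ * M → ∃ k : ℤ, M = γ₂^k ∨ M = -(γ₂^k) := by
    intro M hM
    obtain ⟨k, hk | hk⟩ := aux_central q₂ h₂ T₂ U₂ hT₂ hU₂ hPell₂ hmin₂ γ₂ hγ₂ M hM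
    · exact ⟨k, Or.inl (Subtype.ext hk)⟩
    · exact ⟨k, Or.inr (Subtype.ext (by rw [hk]; simp))⟩
  have hwd : ∀ x y : DCosetDom γ₁ γ₂, dcRel γ₁ γ₂ x y →
      (Quot.mk (simConjRel γ₁ γ₂)
        ⟨(x.1 * γ₁ * x.1⁻¹, γ₂), ⟨x.1, rfl⟩, ⟨1, by group⟩, x.2⟩ : Quot (simConjRel γ₁ γ₂)) =
      Quot.mk (simConjRel γ₁ γ₂)
        ⟨(y.1 * γ₁ * y.1⁻¹, γ₂), ⟨y.1, rfl⟩, ⟨1, by group⟩, y.2⟩ := by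
    rintro x y ⟨j, k, hjk | hjk⟩
    · have hy : y.1 = γ₂^j * x.1 * γ₁^k := Subtype.ext hjk
      apply Quot.sound
      refine ⟨γ₂^j, ?_, by group⟩
      show y.1 * γ₁ * y.1⁻¹ = γ₂^j * (x.1 * γ₁ * x.1⁻¹) * (γ₂^j)⁻¹
      rw [hy]; group
    · have hy : y.1 = -(γ₂^j * x.1 * γ₁^k) := Subtype.ext (by rw [hjk]; simp)
      apply Quot.sound
      refine ⟨γ₂^j, ?_, by group⟩
      show y.1 * γ₁ * y.1⁻¹ = γ₂^j * (x.1 * γ₁ * x.1⁻¹) * (γ₂^j)⁻¹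
      rw [hy, neg_conj]; group
  refine ⟨Quot.lift (fun σ : DCosetDom γ₁ γ₂ =>
      (Quot.mk (simConjRel γ₁ γ₂)
        ⟨(σ.1 * γ₁ * σ.1⁻¹, γ₂), ⟨σ.1, rfl⟩, ⟨1, by group⟩, σ.2⟩ : Quot (simConjRel γ₁ γ₂)))
      hwd, ⟨?_, ?_⟩, fun σ hσ => rfl⟩
  · -- injective
    intro X Y hf
    obtain ⟨x, rfl⟩ := Quot.exists_rep X
    obtain ⟨y, rfl⟩ := Quot.exists_rep Y
    have hrel := ((simConj_equivalence γ₁ γ₂).eqvGen_iff).mp (Quot.eq.mp hf)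
    obtain ⟨α, hα1, hα2⟩ := hrel
    simp only at hα1 hα2
    have hαc : α * γ₂ = γ₂ * α := by
      conv_rhs => rw [hα2]
      group
    obtain ⟨j, hj⟩ := cent₂' α hαc
    obtain ⟨β, hβdef⟩ : ∃ β : SL2Z, β = y.1⁻¹ * α * x.1 := ⟨_, rfl⟩
    have hβ1 : β * γ₁ * β⁻¹ = γ₁ := by
      have e : β * γ₁ * β⁻¹ = y.1⁻¹ * (α * (x.1 * γ₁ * x.1⁻¹) * α⁻¹) * y.1 := by
        rw [hβdef]; group
      rw [e, ← hα1]; group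
    have hβc : β * γ₁ = γ₁ * β := by
      have h5 : γ₁ * β = β * γ₁ := by
        conv_lhs => rw [← hβ1]
        group
      exact h5.symm
    obtain ⟨m, hm⟩ := cent₁' β hβc
    have hσ' : y.1 = α * x.1 * β⁻¹ := by rw [hβdef]; group
    apply Quot.sound
    rcases hj with hj | hj <;> rcases hm with hm | hm
    · refine ⟨j, -m, Or.inl ?_⟩
      have : y.1 = γ₂^j * x.1 * γ₁^(-m) := by rw [hσ', hj, hm, zpow_neg]
      exact congrArg Subtype.val this
    · refine ⟨j, -m, Or.inr ?_⟩
      have : y.1 = -(γ₂^j * x.1 * γ₁^(-m)) := by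
        rw [hσ', hj, hm, inv_neg, zpow_neg, mul_neg]
      rw [this]; simp
    · refine ⟨j, -m, Or.inr ?_⟩
      have : y.1 = -(γ₂^j * x.1 * γ₁^(-m)) := by
        rw [hσ', hj, hm, zpow_neg]
        simp [neg_mul]
      rw [this]; simp
    · refine ⟨j, -m, Or.inl ?_⟩
      have : y.1 = γ₂^j * x.1 * γ₁^(-m) := by
        rw [hσ', hj, hm, inv_neg, zpow_neg]
        simp [neg_mul, mul_neg]
      exact congrArg Subtype.val this
  · -- surjective
    intro Y
    refine Quot.inductionOn Y (fun p => ?_)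
    obtain ⟨α₁, hp1⟩ := p.2.1
    obtain ⟨α₂, hp2⟩ := p.2.2.1
    have hpd := p.2.2.2
    have hconj : (α₂⁻¹ * α₁) * γ₁ * (α₂⁻¹ * α₁)⁻¹ = α₂⁻¹ * p.1.1 * (α₂⁻¹)⁻¹ := by
      rw [hp1]; group
    have hconj2 : γ₂ = α₂⁻¹ * p.1.2 * (α₂⁻¹)⁻¹ := by rw [hp2]; group
    have e := detComm_conj α₂⁻¹ p.1.1 p.1.2
    rw [← hconj, ← hconj2] at e
    have hσ : 0 < detComm ((α₂⁻¹ * α₁) * γ₁ * (α₂⁻¹ * α₁)⁻¹) γ₂ := by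
      rw [e]; exact hpd
    refine ⟨Quot.mk _ ⟨α₂⁻¹ * α₁, hσ⟩, Quot.sound ⟨α₂, ?_, ?_⟩⟩
    · rw [hp1]; group
    · exact hp2
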